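/- Every countable complemented modular lattice has a Banaschewski function whose range is a Boolean sublattice (with the same bounds). -/

import Mathlib

open scoped Classical
set_option linter.unusedSectionVars false
set_option maxHeartbeats 1000000

namespace Stmt11Aux

variable {L : Type*} [Lattice L] [BoundedOrder L] [IsModularLattice L] [ComplementedLattice L]

def jn (l : List L) : L := l.foldr (· ⊔ ·) ⊥
@[simp] lemma jn_nil : jn ([] : List L) = ⊥ := rfl
@[simp] lemma jn_cons (p : L) (l : List L) : jn (p :: l) = p ⊔ jn l := rfl
lemma jn_le {l : List L} {b : L} (h : ∀ x ∈ l, x ≤ b) : jn l ≤ b := by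
  induction l with
  | nil => simp [jn]
  | cons p l ih => simpa using sup_le (h p (by simp)) (ih fun x hx => h x (by simp [hx]))
lemma le_jn {l : List L} {x : L} (h : x ∈ l) : x ≤ jn l := by
  induction l with
  | nil => simp at h
  | cons p l ih =>
    rcases List.mem_cons.1 h with h | h
    · simp [h]
    · exact le_trans (ih h) (by simp)

noncomputable def cmpl (x : L) : L := (exists_isCompl x).choose
lemma isCompl_cmpl (x : L) : IsCompl x (cmpl x) := (exists_isCompl x).choose_spec
@[simp] lemma cmpl_inf (x : L) : x ⊓ cmpl x = ⊥ := (isCompl_cmpl x).inf_eq_bot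
@[simp] lemma cmpl_sup (x : L) : x ⊔ cmpl x = ⊤ := (isCompl_cmpl x).sup_eq_top
lemma cmpl_bot : (cmpl (⊥ : L)) = ⊤ := by
  have := cmpl_sup (⊥ : L); simpa using this

lemma absorb {x a g : L} (h1 : x ⊓ a = ⊥) (h2 : g ⊓ (x ⊔ a) = ⊥) : (x ⊔ g) ⊓ a = ⊥ := by
  have key : (x ⊔ g) ⊓ (x ⊔ a) = x := by
    rw [sup_inf_assoc_of_le (x := x) (z := x ⊔ a) g le_sup_left, h2, sup_bot_eq]
  have : (x ⊔ g) ⊓ a ≤ x := by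
    calc (x ⊔ g) ⊓ a ≤ (x ⊔ g) ⊓ (x ⊔ a) := inf_le_inf_left _ le_sup_right
    _ = x := key
  have h3 : (x ⊔ g) ⊓ a ≤ x ⊓ a := le_inf this inf_le_right
  exact le_antisymm (h3.trans h1.le) bot_le

/-- independence of a list of "pieces", relative to accumulated join `s` of earlier ones -/
def Ind : List L → L → Prop
  | [], _ => True
  | p :: P, s => p ⊓ (s ⊔ jn P) = ⊥ ∧ Ind P (s ⊔ p)

@[simp] lemma Ind_nil (s : L) : Ind ([] : List L) s := trivial
@[simp] lemma Ind_cons {p : L} {P : List L} {s : L} :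
    Ind (p :: P) s ↔ p ⊓ (s ⊔ jn P) = ⊥ ∧ Ind P (s ⊔ p) := Iff.rfl

lemma Ind.mono {P : List L} {s s' : L} (h : Ind P s) (hs : s' ≤ s) : Ind P s' := by
  induction P generalizing s s' with
  | nil => trivial
  | cons p P ih =>
    obtain ⟨h1, h2⟩ := h
    refine ⟨le_antisymm (le_trans (inf_le_inf_left _ (sup_le_sup_right hs _)) h1.le) bot_le, ?_⟩
    exact ih h2 (sup_le_sup_right hs _)

/-- the greedy complement-building pass.  Given the new element `a`, the remaining list of
pieces and the join `prev` of already chosen parts, returns the refined list of pieces and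
the join of chosen parts of the remaining pieces. -/
noncomputable def run (a : L) : List L → L → List L × L
  | [], _ => ([], ⊥)
  | p :: P, prev =>
    (((cmpl ((prev ⊔ a) ⊓ p) ⊓ p) :: ((prev ⊔ a) ⊓ p) ::
        (run a P (prev ⊔ (cmpl ((prev ⊔ a) ⊓ p) ⊓ p))).1),
      (cmpl ((prev ⊔ a) ⊓ p) ⊓ p) ⊔ (run a P (prev ⊔ (cmpl ((prev ⊔ a) ⊓ p) ⊓ p))).2)

@[simp] lemma run_nil (a prev : L) : run a ([] : List L) prev = ([], ⊥) := rfl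

lemma run_cons (a p prev : L) (P : List L) :
    run a (p :: P) prev =
      ((cmpl ((prev ⊔ a) ⊓ p) ⊓ p) :: ((prev ⊔ a) ⊓ p) ::
          (run a P (prev ⊔ (cmpl ((prev ⊔ a) ⊓ p) ⊓ p))).1,
        (cmpl ((prev ⊔ a) ⊓ p) ⊓ p) ⊔ (run a P (prev ⊔ (cmpl ((prev ⊔ a) ⊓ p) ⊓ p))).2) := rfl

section runfacts

variable (a : L)

-- g ⊔ m = p and g ⊓ m = ⊥
lemma g_sup_m {prev p : L} : (cmpl ((prev ⊔ a) ⊓ p) ⊓ p) ⊔ ((prev ⊔ a) ⊓ p) = p := by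
  set m := (prev ⊔ a) ⊓ p with hm
  have hmp : m ≤ p := inf_le_right
  rw [sup_comm, ← sup_inf_assoc_of_le (x := m) (z := p) (cmpl m) hmp, cmpl_sup, top_inf_eq]

lemma g_inf_m {prev p : L} : (cmpl ((prev ⊔ a) ⊓ p) ⊓ p) ⊓ ((prev ⊔ a) ⊓ p) = ⊥ := by
  set m := (prev ⊔ a) ⊓ p
  exact le_antisymm (le_trans (inf_le_inf_right _ inf_le_left)
    (by rw [inf_comm]; exact (cmpl_inf m).le)) bot_le

lemma g_le_p {prev p : L} : (cmpl ((prev ⊔ a) ⊓ p) ⊓ p) ≤ p := inf_le_right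

/-- R2 : the result meets (prev ⊔ a) trivially -/
lemma g_inf_pa {prev p : L} : (cmpl ((prev ⊔ a) ⊓ p) ⊓ p) ⊓ (prev ⊔ a) = ⊥ := by
  set m := (prev ⊔ a) ⊓ p with hm
  set g := cmpl m ⊓ p with hg
  have h1 : g ⊓ (prev ⊔ a) ≤ cmpl m ⊓ m := by
    refine le_inf (le_trans inf_le_left inf_le_left) (le_inf inf_le_right ?_)
    exact le_trans inf_le_left inf_le_right
  have h2 : cmpl m ⊓ m = ⊥ := by rw [inf_comm]; exact cmpl_inf m
  exact le_antisymm (h1.trans h2.le) bot_le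

/-- R2 : the result meets (prev ⊔ a) trivially -/
lemma run_inf (P : List L) : ∀ prev : L, (run a P prev).2 ⊓ (prev ⊔ a) = ⊥ := by
  induction P with
  | nil => intro prev; simp
  | cons p P ih =>
    intro prev
    rw [run_cons]
    set m := (prev ⊔ a) ⊓ p with hm
    set g := cmpl m ⊓ p with hg
    have h2 : (run a P (prev ⊔ g)).2 ⊓ (g ⊔ (prev ⊔ a)) = ⊥ := by
      have := ih (prev ⊔ g)
      rwa [show prev ⊔ g ⊔ a = g ⊔ (prev ⊔ a) by
        rw [sup_comm prev g, sup_assoc]] at this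
    simpa using absorb (g_inf_pa a) h2

/-- R3 : coverage -/
lemma jn_le_run (P : List L) : ∀ prev : L, jn P ≤ (run a P prev).2 ⊔ prev ⊔ a := by
  induction P with
  | nil => intro prev; simp
  | cons p P ih =>
    intro prev
    rw [run_cons, jn_cons]
    set m := (prev ⊔ a) ⊓ p with hm
    set g := cmpl m ⊓ p with hg
    set c' := (run a P (prev ⊔ g)).2 with hc
    refine sup_le ?_ ?_
    · have hp : p = g ⊔ m := (g_sup_m a).symm
      calc p = g ⊔ m := hp
      _ ≤ g ⊔ (prev ⊔ a) := sup_le_sup_left inf_le_left _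
      _ ≤ g ⊔ c' ⊔ prev ⊔ a := by
          refine sup_le (le_sup_of_le_left (le_sup_of_le_left le_sup_left)) ?_
          exact sup_le (le_sup_of_le_left le_sup_right) le_sup_right
    · have := ih (prev ⊔ g)
      calc jn P ≤ c' ⊔ (prev ⊔ g) ⊔ a := this
      _ ≤ g ⊔ c' ⊔ prev ⊔ a := by
          refine sup_le (sup_le (le_sup_of_le_left (le_sup_of_le_left le_sup_right)) (sup_le ?_ ?_)) le_sup_right
          · exact le_sup_of_le_left le_sup_right
          · exact le_sup_of_le_left (le_sup_of_le_left le_sup_left)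

/-- R1 : join preserved -/
lemma run_jn (P : List L) : ∀ prev : L, jn (run a P prev).1 = jn P := by
  induction P with
  | nil => intro prev; simp
  | cons p P ih =>
    intro prev
    rw [run_cons, jn_cons, jn_cons, jn_cons, ← sup_assoc, g_sup_m a, ih]

/-- pieces of the run are ≤ the matching old piece, and Ind is preserved -/
lemma ind_run (P : List L) : ∀ prev s : L, Ind P s → Ind (run a P prev).1 s := by
  induction P with
  | nil => intro prev s _; simp
  | cons p P ih =>
    intro prev s h
    obtain ⟨h1, h2⟩ := h
    rw [run_cons]
    set m := (prev ⊔ a) ⊓ p with hm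
    set g := cmpl m ⊓ p with hg
    have hjn : jn (run a P (prev ⊔ g)).1 = jn P := run_jn a P _
    have hmlep : m ≤ p := inf_le_right
    have hglep : g ≤ p := inf_le_right
    have hgm : g ⊓ m = ⊥ := g_inf_m a
    refine ⟨?_, ?_, ?_⟩
    · -- g ⊓ (s ⊔ (m ⊔ jn rest)) = ⊥
      rw [jn_cons, hjn]
      have key : p ⊓ (m ⊔ (s ⊔ jn P)) = m := by
        rw [inf_comm, sup_inf_assoc_of_le (x := m) (z := p) _ hmlep, inf_comm _ p, h1, sup_bot_eq]
      have : g ⊓ (s ⊔ (m ⊔ jn P)) ≤ m := by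
        calc g ⊓ (s ⊔ (m ⊔ jn P)) ≤ p ⊓ (m ⊔ (s ⊔ jn P)) := by
              refine le_inf (inf_le_left.trans hglep) (inf_le_right.trans ?_)
              rw [← sup_assoc, sup_comm s m, sup_assoc]
        _ = m := key
      exact le_antisymm (le_inf inf_le_left this |>.trans hgm.le) bot_le
    · -- m ⊓ (s ⊔ g ⊔ jn rest) = ⊥
      rw [hjn]
      have key : p ⊓ (g ⊔ (s ⊔ jn P)) = g := by
        rw [inf_comm, sup_inf_assoc_of_le (x := g) (z := p) _ hglep, inf_comm _ p, h1, sup_bot_eq]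
      have : m ⊓ (s ⊔ g ⊔ jn P) ≤ g := by
        calc m ⊓ (s ⊔ g ⊔ jn P) ≤ p ⊓ (g ⊔ (s ⊔ jn P)) := by
              refine le_inf (inf_le_left.trans hmlep) (inf_le_right.trans ?_)
              rw [sup_comm s g, sup_assoc]
        _ = g := key
      have hmg : m ⊓ g = ⊥ := by rw [inf_comm]; exact hgm
      exact le_antisymm (le_inf inf_le_left this |>.trans hmg.le) bot_le
    · -- Ind rest (s ⊔ g ⊔ m)
      have : s ⊔ g ⊔ m = s ⊔ p := by rw [sup_assoc, g_sup_m a]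
      rw [this]
      exact ih _ _ h2

end runfacts
/-- plain selector: entries are the piece or ⊥ -/
def Sel : List L → List L → Prop := List.Forall₂ (fun e p => e = p ∨ e = ⊥)

/-- selector with the "greedy certificate": any dropped piece lies below `x` joined with
the earlier kept parts (accumulated in `w`). -/
inductive SelG (x : L) : List L → List L → L → Prop
  | nil (w : L) : SelG x [] [] w
  | keep (p : L) (P sel : List L) (w : L) :
      SelG x P sel (w ⊔ p) → SelG x (p :: P) (p :: sel) w
  | drop (p : L) (P sel : List L) (w : L) :
      p ≤ x ⊔ w → SelG x P sel w → SelG x (p :: P) (⊥ :: sel) w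

lemma SelG.sel {x : L} : ∀ {P sel : List L} {w : L}, SelG x P sel w → Sel sel P := by
  intro P sel w h
  induction h with
  | nil w => exact List.Forall₂.nil
  | keep p P sel w _ ih => exact List.Forall₂.cons (Or.inl rfl) ih
  | drop p P sel w _ _ ih => exact List.Forall₂.cons (Or.inr rfl) ih

variable (a : L)

/-- the selector for the newly built complement -/
lemma selG_run (P : List L) : ∀ prev w : L, prev ≤ w →
    ∃ sel, SelG a (run a P prev).1 sel w ∧ jn sel = (run a P prev).2 := by
  induction P with
  | nil => intro prev w _; exact ⟨[], SelG.nil w, rfl⟩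
  | cons p P ih =>
    intro prev w hpw
    rw [run_cons]
    set m := (prev ⊔ a) ⊓ p with hm
    set g := cmpl m ⊓ p with hg
    obtain ⟨sel, hsel, hjn⟩ := ih (prev ⊔ g) (w ⊔ g) (sup_le_sup_right hpw g)
    refine ⟨g :: ⊥ :: sel, ?_, by simp [hjn]⟩
    refine SelG.keep _ _ _ _ (SelG.drop _ _ _ _ ?_ hsel)
    calc m ≤ prev ⊔ a := inf_le_left
    _ ≤ a ⊔ (w ⊔ g) := sup_le (hpw.trans (le_sup_of_le_right le_sup_left)) le_sup_left

lemma selG_preserved (x : L) (P : List L) : ∀ (sel : List L) (prev w : L), SelG x P sel w →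
    ∃ sel', SelG x (run a P prev).1 sel' w ∧ jn sel' = jn sel := by
  induction P with
  | nil => intro sel prev w h; cases h; exact ⟨[], SelG.nil w, rfl⟩
  | cons p P ih =>
    intro sel prev w h
    rw [run_cons]
    set m := (prev ⊔ a) ⊓ p with hm
    set g := cmpl m ⊓ p with hg
    cases h with
    | keep _ _ sel w hrest =>
      obtain ⟨sel', hsel', hjn'⟩ := ih sel (prev ⊔ g) (w ⊔ p) hrest
      have hperm : w ⊔ g ⊔ m = w ⊔ p := by rw [sup_assoc, g_sup_m a]
      refine ⟨g :: m :: sel', ?_, ?_⟩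
      · refine SelG.keep _ _ _ _ (SelG.keep _ _ _ _ ?_)
        rwa [hperm]
      · rw [jn_cons, jn_cons, jn_cons, hjn', ← sup_assoc, g_sup_m a]
    | drop _ _ sel w hle hrest =>
      obtain ⟨sel', hsel', hjn'⟩ := ih sel (prev ⊔ g) w hrest
      refine ⟨⊥ :: ⊥ :: sel', ?_, by simp [hjn']⟩
      refine SelG.drop _ _ _ _ ((g_le_p a).trans hle) ?_
      have : (⊥ : L) :: sel' = ⊥ :: sel' := rfl
      refine SelG.drop _ _ _ _ ?_ ?_
      · exact le_trans inf_le_right hle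
      · simpa using hsel'

/-- antitonicity I : if a ≤ x then the old value jn sel embeds into the new complement -/
lemma jn_le_run_of_selG (x d : L) (hax : a ≤ x) (hdx : d ⊓ x = ⊥) (P : List L) :
    ∀ (sel : List L) (prev s w : L), Ind P s → SelG x P sel w → w ≤ s → w ≤ d →
      jn sel ≤ d → prev ⊔ a ≤ x ⊔ w → jn sel ≤ (run a P prev).2 := by
  induction P with
  | nil => intro sel prev s w _ h _ _ _ _; cases h; simp
  | cons p P ih =>
    intro sel prev s w hind hselg hws hwd hjnd hprev
    obtain ⟨hind1, hind2⟩ := hind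
    rw [run_cons]
    set m := (prev ⊔ a) ⊓ p with hm
    set g := cmpl m ⊓ p with hg
    cases hselg with
    | keep _ _ sel w hrest =>
      -- entry kept : p ≤ d; show m = ⊥, hence g = p
      have hpd : p ≤ d := le_trans (le_sup_left) (by rw [← jn_cons]; exact hjnd)
      have hps : p ⊓ s = ⊥ := by
        refine le_antisymm (le_trans (inf_le_inf_left _ le_sup_left) hind1.le) bot_le
      have hpxw : p ⊓ (x ⊔ w) = ⊥ := by
        have h1 : d ⊓ (x ⊔ w) = w := by
          rw [inf_comm, sup_comm x w, sup_inf_assoc_of_le (x := w) (z := d) _ hwd,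
            inf_comm x d, hdx, sup_bot_eq]
        have : p ⊓ (x ⊔ w) ≤ p ⊓ w := by
          refine le_inf inf_le_left ?_
          calc p ⊓ (x ⊔ w) ≤ d ⊓ (x ⊔ w) := inf_le_inf_right _ hpd
          _ = w := h1
        have hpw : p ⊓ w ≤ ⊥ := (inf_le_inf_left _ hws).trans hps.le
        exact le_antisymm (this.trans hpw) bot_le
      have hmbot : m = ⊥ := by
        refine le_antisymm ?_ bot_le
        calc m ≤ (x ⊔ w) ⊓ p := inf_le_inf_right _ hprev
        _ = ⊥ := by rw [inf_comm]; exact hpxw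
      have hgp : g = p := by rw [hg, hmbot, cmpl_bot, top_inf_eq]
      rw [jn_cons]
      refine sup_le (hgp ▸ le_sup_left) ?_
      have hih := ih sel (prev ⊔ g) (s ⊔ p) (w ⊔ p) hind2 hrest
        (sup_le_sup_right hws p) (sup_le hwd hpd)
        (le_trans (le_sup_right.trans_eq (jn_cons p sel).symm) hjnd) ?_
      · exact hih.trans le_sup_right
      · rw [hgp]
        refine sup_le (sup_le ?_ ?_) (hax.trans le_sup_left)
        · exact le_trans (le_sup_left.trans hprev) (sup_le_sup_left le_sup_left x)
        · exact le_sup_of_le_right le_sup_right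
    | drop _ _ sel w hle hrest =>
      rw [jn_cons]
      have hjnd' : jn sel ≤ d := by
        refine le_trans ?_ hjnd
        rw [jn_cons]; exact le_sup_right
      have hih := ih sel (prev ⊔ g) (s ⊔ p) w hind2 hrest
        (hws.trans le_sup_left) hwd hjnd' ?_
      · exact sup_le bot_le (hih.trans le_sup_right)
      · refine sup_le (sup_le (le_sup_left.trans hprev) ((g_le_p a).trans hle))
          (le_sup_right.trans hprev)

/-- antitonicity II : if x ≤ a then the new complement is below the old value jn sel -/
lemma run_le_jn_of_selG (x : L) (hxa : x ≤ a) (P : List L) :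
    ∀ (sel : List L) (prev w : L), SelG x P sel w → w ≤ prev ⊔ a →
      (run a P prev).2 ≤ jn sel := by
  induction P with
  | nil => intro sel prev w h _; cases h; simp
  | cons p P ih =>
    intro sel prev w hselg hw
    rw [run_cons]
    set m := (prev ⊔ a) ⊓ p with hm
    set g := cmpl m ⊓ p with hg
    cases hselg with
    | keep _ _ sel w hrest =>
      rw [jn_cons]
      refine sup_le (le_sup_of_le_left (g_le_p a)) ?_
      refine (ih sel (prev ⊔ g) (w ⊔ p) hrest ?_).trans le_sup_right
      refine sup_le (hw.trans (sup_le_sup_right le_sup_left a)) ?_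
      calc p = g ⊔ m := (g_sup_m a).symm
      _ ≤ (prev ⊔ g) ⊔ a := sup_le (le_sup_of_le_left le_sup_right)
          (inf_le_left.trans (sup_le_sup_right le_sup_left a))
    | drop _ _ sel w hle hrest =>
      rw [jn_cons]
      have hpm : p ≤ prev ⊔ a := hle.trans (sup_le (hxa.trans le_sup_right) hw)
      have hmp : m = p := by rw [hm]; exact inf_eq_right.2 hpm
      have hgbot : g = ⊥ := by
        refine le_antisymm ?_ bot_le
        have : g ≤ cmpl m ⊓ m := le_inf inf_le_left (hmp ▸ inf_le_right)
        calc g ≤ cmpl m ⊓ m := this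
        _ = ⊥ := by rw [inf_comm]; exact cmpl_inf m
      have hih := ih sel (prev ⊔ g) w hrest (hw.trans (sup_le_sup_right le_sup_left a))
      exact sup_le (hgbot.le.trans bot_le) (hih.trans le_sup_right)


lemma Sel.le_pieces {l P : List L} (h : Sel l P) : List.Forall₂ (· ≤ ·) l P := by
  induction h with
  | nil => exact List.Forall₂.nil
  | cons he _ ih =>
    refine List.Forall₂.cons ?_ ih
    rcases he with h | h
    · exact h.le
    · exact h.le.trans bot_le

lemma jn_le_jn {l P : List L} (h : List.Forall₂ (· ≤ ·) l P) : jn l ≤ jn P := by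
  induction h with
  | nil => simp
  | cons he _ ih => simpa using sup_le_sup he ih

lemma jn_zip_sup : ∀ (l1 l2 : List L), l1.length = l2.length →
    jn (List.zipWith (· ⊔ ·) l1 l2) = jn l1 ⊔ jn l2 := by
  intro l1
  induction l1 with
  | nil =>
    intro l2 h
    cases l2 with
    | nil => simp
    | cons y l2 => simp at h
  | cons x l1 ih =>
    intro l2 h
    cases l2 with
    | nil => simp at h
    | cons y l2 =>
      simp only [List.zipWith_cons_cons, jn_cons]
      rw [ih l2 (by simpa using h), sup_sup_sup_comm]

lemma jn_all_bot {l : List L} (h : ∀ x ∈ l, x = ⊥) : jn l = ⊥ := by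
  refine le_antisymm (jn_le fun x hx => (h x hx).le) bot_le

lemma jn_zip_inf (P : List L) : ∀ (l1 l2 : List L) (s : L), Ind P s →
    List.Forall₂ (· ≤ ·) l1 P → List.Forall₂ (· ≤ ·) l2 P →
    jn (List.zipWith (· ⊓ ·) l1 l2) = jn l1 ⊓ jn l2 := by
  induction P with
  | nil =>
    intro l1 l2 s _ h1 h2
    cases h1; cases h2; simp
  | cons p P ih =>
    intro l1 l2 s hind h1 h2
    obtain ⟨hi1, hi2⟩ := hind
    cases h1 with
    | cons hx h1 =>
      cases h2 with
      | cons hy h2 =>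
        rename_i x l1 y l2
        simp only [List.zipWith_cons_cons, jn_cons]
        set X := jn l1 with hX
        set Y := jn l2 with hY
        set R := jn P with hR
        have hXR : X ≤ R := jn_le_jn h1
        have hYR : Y ≤ R := jn_le_jn h2
        have hpR : p ⊓ R = ⊥ := by
          refine le_antisymm ((inf_le_inf_left _ le_sup_right).trans hi1.le) bot_le
        have hIH : jn (List.zipWith (· ⊓ ·) l1 l2) = X ⊓ Y := ih l1 l2 (s ⊔ p) hi2 h1 h2
        rw [hIH]
        -- now prove (x ⊓ y) ⊔ (X ⊓ Y) = (x ⊔ X) ⊓ (y ⊔ Y)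
        have step1 : X ⊓ (p ⊔ Y) = X ⊓ Y := by
          refine le_antisymm ?_ (le_inf inf_le_left (inf_le_right.trans le_sup_right))
          have h1' : (p ⊔ Y) ⊓ R = Y := by
            rw [sup_comm p Y, sup_inf_assoc_of_le (x := Y) (z := R) p hYR, hpR, sup_bot_eq]
          refine le_inf inf_le_left ?_
          calc X ⊓ (p ⊔ Y) ≤ R ⊓ (p ⊔ Y) := inf_le_inf_right _ hXR
          _ = Y := by rw [inf_comm]; exact h1'
        have step1' : Y ⊓ (p ⊔ X) = Y ⊓ X := by
          refine le_antisymm ?_ (le_inf inf_le_left (inf_le_right.trans le_sup_right))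
          have h1' : (p ⊔ X) ⊓ R = X := by
            rw [sup_comm p X, sup_inf_assoc_of_le (x := X) (z := R) p hXR, hpR, sup_bot_eq]
          refine le_inf inf_le_left ?_
          calc Y ⊓ (p ⊔ X) ≤ R ⊓ (p ⊔ X) := inf_le_inf_right _ hYR
          _ = X := by rw [inf_comm]; exact h1'
        have hub1 : (x ⊔ X) ⊓ (y ⊔ Y) ≤ x ⊔ X ⊓ Y := by
          calc (x ⊔ X) ⊓ (y ⊔ Y) ≤ (x ⊔ X) ⊓ (p ⊔ Y) :=
                inf_le_inf_left _ (sup_le_sup_right hy _)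
          _ = x ⊔ (X ⊓ (p ⊔ Y)) := sup_inf_assoc_of_le (x := x) (z := p ⊔ Y) X
                (hx.trans le_sup_left)
          _ = x ⊔ X ⊓ Y := by rw [step1]
        have hub2 : (x ⊔ X) ⊓ (y ⊔ Y) ≤ y ⊔ X ⊓ Y := by
          calc (x ⊔ X) ⊓ (y ⊔ Y) ≤ (p ⊔ X) ⊓ (y ⊔ Y) :=
                inf_le_inf_right _ (sup_le_sup_right hx _)
          _ = y ⊔ (Y ⊓ (p ⊔ X)) := by
                rw [inf_comm]
                exact sup_inf_assoc_of_le (x := y) (z := p ⊔ X) Y (hy.trans le_sup_left)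
          _ = y ⊔ X ⊓ Y := by rw [step1', inf_comm]
        refine le_antisymm ?_ ?_
        · refine sup_le (le_inf ?_ ?_) (le_inf ?_ ?_)
          · exact le_sup_of_le_left inf_le_left
          · exact le_sup_of_le_left inf_le_right
          · exact le_sup_of_le_right inf_le_left
          · exact le_sup_of_le_right inf_le_right
        · have hcomb : (x ⊔ X) ⊓ (y ⊔ Y) ≤ (X ⊓ Y ⊔ x) ⊓ (X ⊓ Y ⊔ y) := by
            refine le_inf (hub1.trans ?_) (hub2.trans ?_) <;> rw [sup_comm]
          have hstep3 : (X ⊓ Y ⊔ x) ⊓ (X ⊓ Y ⊔ y) = X ⊓ Y ⊔ (x ⊓ (X ⊓ Y ⊔ y)) :=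
            sup_inf_assoc_of_le (x := X ⊓ Y) (z := X ⊓ Y ⊔ y) x le_sup_left
          have hstep4 : x ⊓ (X ⊓ Y ⊔ y) ≤ x ⊓ y := by
            refine le_inf inf_le_left ?_
            have hpXY : p ⊓ (X ⊓ Y) = ⊥ := by
              refine le_antisymm ?_ bot_le
              calc p ⊓ (X ⊓ Y) ≤ p ⊓ R := inf_le_inf_left _ (inf_le_left.trans hXR)
              _ = ⊥ := hpR
            calc x ⊓ (X ⊓ Y ⊔ y) ≤ p ⊓ (y ⊔ X ⊓ Y) := by
                  rw [sup_comm (X ⊓ Y) y]; exact inf_le_inf_right _ hx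
            _ = y ⊔ (X ⊓ Y ⊓ p) := by
                  rw [inf_comm]
                  exact sup_inf_assoc_of_le (x := y) (z := p) (X ⊓ Y) hy
            _ = y := by rw [inf_comm (X ⊓ Y) p, hpXY, sup_bot_eq]
          calc (x ⊔ X) ⊓ (y ⊔ Y) ≤ X ⊓ Y ⊔ (x ⊓ (X ⊓ Y ⊔ y)) := hcomb.trans_eq hstep3
          _ ≤ X ⊓ Y ⊔ x ⊓ y := sup_le_sup_left hstep4 _
          _ = x ⊓ y ⊔ X ⊓ Y := sup_comm _ _

lemma Sel.zip_sup {l1 l2 P : List L} (h1 : Sel l1 P) (h2 : Sel l2 P) :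
    Sel (List.zipWith (· ⊔ ·) l1 l2) P := by
  induction h1 generalizing l2 with
  | nil => cases h2; exact List.Forall₂.nil
  | cons he1 _ ih =>
    cases h2 with
    | cons he2 h2 =>
      refine List.Forall₂.cons ?_ (ih h2)
      rcases he1 with h | h <;> rcases he2 with h' | h' <;> subst h <;> subst h' <;> simp

lemma Sel.zip_inf {l1 l2 P : List L} (h1 : Sel l1 P) (h2 : Sel l2 P) :
    Sel (List.zipWith (· ⊓ ·) l1 l2) P := by
  induction h1 generalizing l2 with
  | nil => cases h2; exact List.Forall₂.nil
  | cons he1 _ ih =>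
    cases h2 with
    | cons he2 h2 =>
      refine List.Forall₂.cons ?_ (ih h2)
      rcases he1 with h | h <;> rcases he2 with h' | h' <;> subst h <;> subst h' <;> simp

lemma zip_distrib {l1 l2 l3 P : List L} (h1 : Sel l1 P) (h2 : Sel l2 P) (h3 : Sel l3 P) :
    List.zipWith (· ⊓ ·) l1 (List.zipWith (· ⊔ ·) l2 l3) =
      List.zipWith (· ⊔ ·) (List.zipWith (· ⊓ ·) l1 l2) (List.zipWith (· ⊓ ·) l1 l3) := by
  induction h1 generalizing l2 l3 with
  | nil => cases h2; cases h3; rfl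
  | cons he1 _ ih =>
    cases h2 with
    | cons he2 h2 =>
      cases h3 with
      | cons he3 h3 =>
        simp only [List.zipWith_cons_cons]
        rw [ih h2 h3]
        congr 1
        rcases he1 with h | h <;> rcases he2 with h' | h' <;> rcases he3 with h'' | h'' <;>
          subst h <;> subst h' <;> subst h'' <;> simp

noncomputable def flip : List L → List L → List L :=
  List.zipWith (fun e p => if e = ⊥ then p else ⊥)

lemma Sel.flip {l P : List L} (h : Sel l P) : Sel (Stmt11Aux.flip l P) P := by
  induction h with
  | nil => exact List.Forall₂.nil
  | @cons e p l1 l2 he htail ih =>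
    refine List.Forall₂.cons ?_ ih
    by_cases hb : e = ⊥ <;> simp [Stmt11Aux.flip, hb]

lemma flip_sup {l P : List L} (h : Sel l P) : List.zipWith (· ⊔ ·) l (Stmt11Aux.flip l P) = P := by
  induction h with
  | nil => rfl
  | @cons e p l1 l2 he htail ih =>
    simp only [Stmt11Aux.flip, List.zipWith_cons_cons] at ih ⊢
    rw [ih]
    rcases he with h | h
    · subst h
      by_cases hb : e = ⊥ <;> simp [hb]
    · subst h; simp

lemma flip_inf_bot {l P : List L} (h : Sel l P) :
    ∀ x ∈ List.zipWith (· ⊓ ·) l (Stmt11Aux.flip l P), x = ⊥ := by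
  induction h with
  | nil => simp [Stmt11Aux.flip]
  | @cons e p l1 l2 he htail ih =>
    simp only [Stmt11Aux.flip, List.zipWith_cons_cons, List.mem_cons] at ih ⊢
    rintro x (rfl | hx)
    · rcases he with h | h
      · subst h
        by_cases hb : e = ⊥ <;> simp [hb]
      · subst h; simp
    · exact ih x hx


/-- plain Sel survives the refinement -/
lemma sel_preserved (a : L) (P : List L) : ∀ (sel : List L) (prev : L), Sel sel P →
    ∃ sel', Sel sel' (run a P prev).1 ∧ jn sel' = jn sel := by
  induction P with
  | nil => intro sel prev h; cases h; exact ⟨[], List.Forall₂.nil, rfl⟩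
  | cons p P ih =>
    intro sel prev h
    rw [run_cons]
    set m := (prev ⊔ a) ⊓ p with hm
    set g := cmpl m ⊓ p with hg
    cases h with
    | @cons x _ sel _ he htail =>
      rcases he with hx | hx
      · obtain ⟨sel', hsel', hjn'⟩ := ih sel (prev ⊔ g) htail
        refine ⟨g :: m :: sel', List.Forall₂.cons (Or.inl rfl)
          (List.Forall₂.cons (Or.inl rfl) hsel'), ?_⟩
        rw [jn_cons, jn_cons, jn_cons, hjn', ← sup_assoc, g_sup_m a, hx]
      · obtain ⟨sel', hsel', hjn'⟩ := ih sel (prev ⊔ g) htail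
        refine ⟨⊥ :: ⊥ :: sel', List.Forall₂.cons (Or.inr rfl)
          (List.Forall₂.cons (Or.inr rfl) hsel'), ?_⟩
        rw [jn_cons, jn_cons, jn_cons, hjn', hx]
        simp

/-- the distributivity consequence for joins of selectors -/
lemma dist3 {P l1 l2 l3 : List L} (hind : Ind P ⊥) (h1 : Sel l1 P) (h2 : Sel l2 P)
    (h3 : Sel l3 P) :
    jn l1 ⊓ (jn l2 ⊔ jn l3) = (jn l1 ⊓ jn l2) ⊔ (jn l1 ⊓ jn l3) := by
  have hlen1 := h1.length_eq
  have hlen2 := h2.length_eq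
  have hlen3 := h3.length_eq
  have hzsup : jn (List.zipWith (· ⊔ ·) l2 l3) = jn l2 ⊔ jn l3 :=
    jn_zip_sup l2 l3 (hlen2.trans hlen3.symm)
  have hzsel : Sel (List.zipWith (· ⊔ ·) l2 l3) P := h2.zip_sup h3
  have hzinf : jn (List.zipWith (· ⊓ ·) l1 (List.zipWith (· ⊔ ·) l2 l3)) =
      jn l1 ⊓ (jn l2 ⊔ jn l3) := by
    rw [jn_zip_inf P _ _ ⊥ hind h1.le_pieces hzsel.le_pieces, hzsup]
  rw [← hzinf, zip_distrib h1 h2 h3, jn_zip_sup _ _ ?hl,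
    jn_zip_inf P _ _ ⊥ hind h1.le_pieces h2.le_pieces,
    jn_zip_inf P _ _ ⊥ hind h1.le_pieces h3.le_pieces]
  case hl =>
    rw [List.length_zipWith, List.length_zipWith, hlen1, hlen2, hlen3]

section Global

variable (e : ℕ → L)

noncomputable def st : ℕ → List L × List (L × L)
  | 0 => ([⊤], [])
  | n + 1 => ((run (e n) (st n).1 ⊥).1, (e n, (run (e n) (st n).1 ⊥).2) :: (st n).2)

structure Inv (P : List L) (A : List (L × L)) : Prop where
  ind : Ind P ⊥
  top : jn P = ⊤
  compl_inf : ∀ q ∈ A, q.2 ⊓ q.1 = ⊥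
  compl_sup : ∀ q ∈ A, q.2 ⊔ q.1 = ⊤
  good : ∀ q ∈ A, ∃ sel, SelG q.1 P sel ⊥ ∧ jn sel = q.2
  anti : ∀ q ∈ A, ∀ r ∈ A, q.1 ≤ r.1 → r.2 ≤ q.2

theorem step_inv {P : List L} {A : List (L × L)} (a : L) (h : Inv P A) :
    Inv (run a P ⊥).1 ((a, (run a P ⊥).2) :: A) := by
  set c := (run a P ⊥).2 with hc
  have hcinf : c ⊓ a = ⊥ := by
    have := run_inf a P ⊥
    rwa [bot_sup_eq] at this
  have hcsup : c ⊔ a = ⊤ := by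
    have h2 := jn_le_run a P ⊥
    rw [h.top, sup_bot_eq] at h2
    exact le_antisymm le_top h2
  -- the new value dominates old values of larger elements
  have hantiOld : ∀ q ∈ A, a ≤ q.1 → q.2 ≤ c := by
    intro q hq hle
    obtain ⟨sel, hselg, hjn⟩ := h.good q hq
    have := jn_le_run_of_selG a q.1 q.2 hle (h.compl_inf q hq) P sel ⊥ ⊥ ⊥
      h.ind hselg le_rfl bot_le hjn.le (by simpa using hle)
    exact hjn ▸ this
  have hantiNew : ∀ q ∈ A, q.1 ≤ a → c ≤ q.2 := by
    intro q hq hle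
    obtain ⟨sel, hselg, hjn⟩ := h.good q hq
    have := run_le_jn_of_selG a q.1 hle P sel ⊥ ⊥ hselg bot_le
    exact this.trans hjn.le
  refine ⟨ind_run a P ⊥ ⊥ h.ind, by rw [run_jn a P ⊥, h.top], ?_, ?_, ?_, ?_⟩
  · intro q hq
    rcases List.mem_cons.1 hq with rfl | hq
    · exact hcinf
    · exact h.compl_inf q hq
  · intro q hq
    rcases List.mem_cons.1 hq with rfl | hq
    · exact hcsup
    · exact h.compl_sup q hq
  · intro q hq
    rcases List.mem_cons.1 hq with rfl | hq
    · obtain ⟨sel, hselg, hjn⟩ := selG_run a P ⊥ ⊥ le_rfl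
      exact ⟨sel, hselg, hjn⟩
    · obtain ⟨sel, hselg, hjn⟩ := h.good q hq
      obtain ⟨sel', hselg', hjn'⟩ := selG_preserved a q.1 P sel ⊥ ⊥ hselg
      exact ⟨sel', hselg', hjn'.trans hjn⟩
  · intro q hq r hr
    rcases List.mem_cons.1 hq with rfl | hq <;> rcases List.mem_cons.1 hr with rfl | hr
    · intro _; exact le_rfl
    · exact hantiOld r hr
    · exact hantiNew q hq
    · exact h.anti q hq r hr

theorem inv_st : ∀ n, Inv (st e n).1 (st e n).2 := by
  intro n
  induction n with
  | zero =>
    have h1 : (st e 0) = ([⊤], []) := rfl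
    rw [h1]
    exact ⟨⟨by simp, trivial⟩, by simp, by simp, by simp, by simp, by simp⟩
  | succ n ih => exact step_inv (e n) ih

lemma mem_st_mono {q : L × L} {n m : ℕ} (hnm : n ≤ m) (hq : q ∈ (st e n).2) :
    q ∈ (st e m).2 := by
  induction m with
  | zero => exact (Nat.le_zero.1 hnm) ▸ hq
  | succ m ih =>
    rcases Nat.lt_or_ge n (m+1) with h | h
    · have := ih (Nat.lt_succ_iff.1 h)
      simp only [st, List.mem_cons]
      exact Or.inr this
    · exact (Nat.le_antisymm hnm h) ▸ hq

lemma sel_st_mono {l : List L} {n m : ℕ} (hnm : n ≤ m) (hl : Sel l (st e n).1) :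
    ∃ l', Sel l' (st e m).1 ∧ jn l' = jn l := by
  induction m with
  | zero => exact (Nat.le_zero.1 hnm) ▸ ⟨l, hl, rfl⟩
  | succ m ih =>
    rcases Nat.lt_or_ge n (m+1) with h | h
    · obtain ⟨l', hl', hjn'⟩ := ih (Nat.lt_succ_iff.1 h)
      obtain ⟨l'', hl'', hjn''⟩ := sel_preserved (e m) (st e m).1 l' ⊥ hl'
      exact ⟨l'', hl'', hjn''.trans hjn'⟩
    · exact (Nat.le_antisymm hnm h) ▸ ⟨l, hl, rfl⟩

lemma sel_of_pair {q : L × L} {n m : ℕ} (hnm : n ≤ m) (hq : q ∈ (st e n).2) :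
    ∃ l, Sel l (st e m).1 ∧ jn l = q.2 := by
  obtain ⟨sel, hselg, hjn⟩ := (inv_st e n).good q hq
  obtain ⟨l', hl', hjn'⟩ := sel_st_mono e hnm hselg.sel
  exact ⟨l', hl', hjn'.trans hjn⟩

end Global


section Main

variable (e : ℕ → L) (hsurj : Function.Surjective e)

noncomputable def cval (n : ℕ) : L := (run (e n) (st e n).1 ⊥).2

lemma cval_pair (n : ℕ) : (e n, cval e n) ∈ (st e (n + 1)).2 := by
  have h : (st e (n+1)).2 = (e n, cval e n) :: (st e n).2 := rfl
  rw [h]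
  exact List.mem_cons_self

noncomputable def fB (x : L) : L := cval e ((hsurj x).choose)

lemma fB_pair (x : L) : (x, fB e hsurj x) ∈ (st e ((hsurj x).choose + 1)).2 := by
  have hx : e ((hsurj x).choose) = x := (hsurj x).choose_spec
  have := cval_pair e ((hsurj x).choose)
  rwa [hx] at this

lemma fB_inf (x : L) : fB e hsurj x ⊓ x = ⊥ :=
  (inv_st e _).compl_inf _ (fB_pair e hsurj x)

lemma fB_sup (x : L) : fB e hsurj x ⊔ x = ⊤ :=
  (inv_st e _).compl_sup _ (fB_pair e hsurj x)

lemma fB_anti : Antitone (fB e hsurj) := by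
  intro x y hxy
  set n1 := (hsurj x).choose + 1
  set n2 := (hsurj y).choose + 1
  have h1 := mem_st_mono e (le_max_left n1 n2) (fB_pair e hsurj x)
  have h2 := mem_st_mono e (le_max_right n1 n2) (fB_pair e hsurj y)
  exact (inv_st e (max n1 n2)).anti _ h1 _ h2 hxy

/-- every join of pieces is a value of fB -/
lemma range_of_sel {N : ℕ} {l : List L} (hl : Sel l (st e N).1) :
    ∃ z, fB e hsurj z = jn l := by
  set P := (st e N).1 with hP
  set b := jn l with hb
  set lf := Stmt11Aux.flip l P with hlf
  set bf := jn lf with hbf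
  have hSelf : Sel lf P := hl.flip
  have hsup : b ⊔ bf = ⊤ := by
    have h1 := jn_zip_sup l lf (hl.length_eq.trans hSelf.length_eq.symm)
    have h2 : List.zipWith (· ⊔ ·) l lf = P := flip_sup hl
    rw [h2] at h1
    rw [← h1, (inv_st e N).top]
  have hinf : b ⊓ bf = ⊥ := by
    have h1 := jn_zip_inf P l lf ⊥ (inv_st e N).ind hl.le_pieces hSelf.le_pieces
    rw [jn_all_bot (flip_inf_bot hl)] at h1
    exact h1.symm
  set n0 := (hsurj bf).choose + 1 with hn0
  set M := max N n0 with hM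
  set c := fB e hsurj bf with hc
  have hpairM : (bf, c) ∈ (st e M).2 := mem_st_mono e (le_max_right N n0) (fB_pair e hsurj bf)
  obtain ⟨l1, hl1, hjn1⟩ := sel_st_mono e (le_max_left N n0) hl
  obtain ⟨l2, hl2, hjn2⟩ := sel_st_mono e (le_max_left N n0) hSelf
  obtain ⟨l3, hl3, hjn3⟩ := sel_of_pair e (le_refl M) hpairM
  have hcinf : c ⊓ bf = ⊥ := (inv_st e M).compl_inf _ hpairM
  have hcsup : c ⊔ bf = ⊤ := (inv_st e M).compl_sup _ hpairM
  have hind := (inv_st e M).ind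
  have hd1 : c ⊓ (bf ⊔ b) = (c ⊓ bf) ⊔ (c ⊓ b) := by
    have := dist3 hind hl3 hl2 hl1
    rwa [hjn1, hjn2, hjn3] at this
  have hd2 : b ⊓ (bf ⊔ c) = (b ⊓ bf) ⊔ (b ⊓ c) := by
    have := dist3 hind hl1 hl2 hl3
    rwa [hjn1, hjn2, hjn3] at this
  have hcb : c ≤ b := by
    have h1 : c = c ⊓ b := by
      have h2 : bf ⊔ b = ⊤ := by rw [sup_comm]; exact hsup
      calc c = c ⊓ (bf ⊔ b) := by rw [h2, inf_top_eq]
      _ = (c ⊓ bf) ⊔ (c ⊓ b) := hd1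
      _ = c ⊓ b := by rw [hcinf, bot_sup_eq]
    exact h1.le.trans inf_le_right
  have hbc : b ≤ c := by
    have h1 : b = b ⊓ c := by
      have h2 : bf ⊔ c = ⊤ := by rw [sup_comm]; exact hcsup
      calc b = b ⊓ (bf ⊔ c) := by rw [h2, inf_top_eq]
      _ = (b ⊓ bf) ⊔ (b ⊓ c) := hd2
      _ = b ⊓ c := by rw [hinf, bot_sup_eq]
    exact h1.le.trans inf_le_right
  exact ⟨bf, le_antisymm hcb hbc⟩

/-- values of fB have selectors at late enough stages -/
lemma sel_of_fB (x : L) {N : ℕ} (hN : (hsurj x).choose + 1 ≤ N) :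
    ∃ l, Sel l (st e N).1 ∧ jn l = fB e hsurj x :=
  sel_of_pair e hN (fB_pair e hsurj x)

end Main

theorem main [Countable L] :
    ∃ f : L → L, Antitone f ∧ (∀ x : L, x ⊔ f x = ⊤) ∧ (∀ x : L, x ⊓ f x = ⊥) ∧
      (⊥ ∈ Set.range f) ∧ (⊤ ∈ Set.range f) ∧
      (∀ a ∈ Set.range f, ∀ b ∈ Set.range f, a ⊔ b ∈ Set.range f) ∧
      (∀ a ∈ Set.range f, ∀ b ∈ Set.range f, a ⊓ b ∈ Set.range f) ∧
      (∀ a ∈ Set.range f, ∀ b ∈ Set.range f, ∀ c ∈ Set.range f,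
        a ⊓ (b ⊔ c) = (a ⊓ b) ⊔ (a ⊓ c)) ∧
      (∀ a ∈ Set.range f, ∃ b ∈ Set.range f, a ⊔ b = ⊤ ∧ a ⊓ b = ⊥) := by
  have : Nonempty L := ⟨⊥⟩
  obtain ⟨e, hsurj⟩ := exists_surjective_nat L
  refine ⟨fB e hsurj, fB_anti e hsurj, ?_, ?_, ?_, ?_, ?_, ?_, ?_, ?_⟩
  · intro x; rw [sup_comm]; exact fB_sup e hsurj x
  · intro x; rw [inf_comm]; exact fB_inf e hsurj x
  · refine ⟨⊤, ?_⟩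
    have := fB_inf e hsurj ⊤
    rwa [inf_top_eq] at this
  · refine ⟨⊥, ?_⟩
    have := fB_sup e hsurj ⊥
    rwa [sup_bot_eq] at this
  · rintro a ⟨x, rfl⟩ b ⟨y, rfl⟩
    set N := max ((hsurj x).choose + 1) ((hsurj y).choose + 1) with hN
    obtain ⟨l1, hl1, hjn1⟩ := sel_of_fB e hsurj x (le_max_left _ _)
    obtain ⟨l2, hl2, hjn2⟩ := sel_of_fB e hsurj y (le_max_right _ _)
    obtain ⟨z, hz⟩ := range_of_sel e hsurj (hl1.zip_sup hl2)
    refine ⟨z, ?_⟩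
    rw [hz, jn_zip_sup l1 l2 (hl1.length_eq.trans hl2.length_eq.symm), hjn1, hjn2]
  · rintro a ⟨x, rfl⟩ b ⟨y, rfl⟩
    set N := max ((hsurj x).choose + 1) ((hsurj y).choose + 1) with hN
    obtain ⟨l1, hl1, hjn1⟩ := sel_of_fB e hsurj x (le_max_left _ _)
    obtain ⟨l2, hl2, hjn2⟩ := sel_of_fB e hsurj y (le_max_right _ _)
    obtain ⟨z, hz⟩ := range_of_sel e hsurj (hl1.zip_inf hl2)
    refine ⟨z, ?_⟩
    rw [hz, jn_zip_inf _ l1 l2 ⊥ (inv_st e N).ind hl1.le_pieces hl2.le_pieces, hjn1, hjn2]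
  · rintro a ⟨x, rfl⟩ b ⟨y, rfl⟩ c ⟨z, rfl⟩
    set N := max (max ((hsurj x).choose + 1) ((hsurj y).choose + 1)) ((hsurj z).choose + 1)
      with hN
    obtain ⟨l1, hl1, hjn1⟩ := sel_of_fB e hsurj x
      ((le_max_left _ _).trans (le_max_left _ _))
    obtain ⟨l2, hl2, hjn2⟩ := sel_of_fB e hsurj y
      ((le_max_right _ _).trans (le_max_left _ _))
    obtain ⟨l3, hl3, hjn3⟩ := sel_of_fB e hsurj z (le_max_right _ _)
    have := dist3 (inv_st e N).ind hl1 hl2 hl3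
    rwa [hjn1, hjn2, hjn3] at this
  · rintro a ⟨x, rfl⟩
    refine ⟨fB e hsurj (fB e hsurj x), ⟨_, rfl⟩, ?_, ?_⟩
    · rw [sup_comm]; exact fB_sup e hsurj (fB e hsurj x)
    · rw [inf_comm]; exact fB_inf e hsurj (fB e hsurj x)

end Stmt11Aux


/-- Every countable complemented modular lattice has a Banaschewski function whose
range is a Boolean sublattice (with the same bounds). -/
theorem stmt_11 {L : Type*} [Lattice L] [BoundedOrder L] [IsModularLattice L]
    [ComplementedLattice L] [Countable L] :
    ∃ f : L → L, Antitone f ∧ (∀ x : L, x ⊔ f x = ⊤) ∧ (∀ x : L, x ⊓ f x = ⊥) ∧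
      (⊥ ∈ Set.range f) ∧ (⊤ ∈ Set.range f) ∧
      (∀ a ∈ Set.range f, ∀ b ∈ Set.range f, a ⊔ b ∈ Set.range f) ∧
      (∀ a ∈ Set.range f, ∀ b ∈ Set.range f, a ⊓ b ∈ Set.range f) ∧
      (∀ a ∈ Set.range f, ∀ b ∈ Set.range f, ∀ c ∈ Set.range f,
        a ⊓ (b ⊔ c) = (a ⊓ b) ⊔ (a ⊓ c)) ∧
      (∀ a ∈ Set.range f, ∃ b ∈ Set.range f, a ⊔ b = ⊤ ∧ a ⊓ b = ⊥) := by
  exact Stmt11Aux.main
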